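/- Let X be a finite-dimensional polyhedral real Banach space and let Y be a proper subspace of X. Suppose F is a facet of the closed unit ball B_X such that the intrinsic (relative) interior of F has nonempty intersection with Y. Then F ∩ Y is a facet of the closed unit ball B_Y of Y. -/
import Mathlib


noncomputable section

/-- A face of the closed unit ball of a real normed space: either the ball itself or the
intersection of the ball with `{x : f x = 1}` for a linear functional `f` with `f ≤ 1` on
the ball. -/
def IsFace {X : Type*} [NormedAddCommGroup X] [NormedSpace ℝ X] (F : Set X) : Prop :=
  F = Metric.closedBall 0 1 ∨
    ∃ f : X →ₗ[ℝ] ℝ, (∀ x ∈ Metric.closedBall (0 : X) 1, f x ≤ 1) ∧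
      F = Metric.closedBall 0 1 ∩ {x | f x = 1}

/-- A facet of the closed unit ball: a maximal proper face. -/
def IsFacet {X : Type*} [NormedAddCommGroup X] [NormedSpace ℝ X] (F : Set X) : Prop :=
  IsFace F ∧ F ≠ Metric.closedBall 0 1 ∧
    ∀ Q : Set X, IsFace Q → Q ≠ Metric.closedBall 0 1 → F ⊆ Q → F = Q

/-- let `X` be a finite-dimensional polyhedral real Banach space and `Y` a
proper subspace. If `F` is a facet of the closed unit ball of `X` whose intrinsic
(relative) interior meets `Y`, then `F ∩ Y` is a facet of the closed unit ball of `Y`. -/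

lemma relint_extend {X : Type*} [NormedAddCommGroup X] [NormedSpace ℝ X]
    {F : Set X} {x₀ y : X} (hx : x₀ ∈ intrinsicInterior ℝ F) (hy : y ∈ F) :
    ∃ t : ℝ, 0 < t ∧ (1 + t) • x₀ - t • y ∈ F := by
  rw [mem_intrinsicInterior] at hx
  obtain ⟨z, hz, hzx⟩ := hx
  have hx₀F : x₀ ∈ F := by
    have h := interior_subset hz
    rw [Set.mem_preimage] at h
    rwa [hzx] at h
  have hx₀span : x₀ ∈ affineSpan ℝ F := subset_affineSpan ℝ F hx₀F
  have hyspan : y ∈ affineSpan ℝ F := subset_affineSpan ℝ F hy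
  have hmem : ∀ t : ℝ, (1 + t) • x₀ - t • y ∈ affineSpan ℝ F := by
    intro t
    have := AffineSubspace.smul_vsub_vadd_mem (affineSpan ℝ F) t hx₀span hyspan hx₀span
    convert this using 1
    simp [vsub_eq_sub, vadd_eq_add]
    ring_nf
    module
  set c : ℝ → affineSpan ℝ F := fun t => ⟨(1 + t) • x₀ - t • y, hmem t⟩ with hc
  have hcont : Continuous c := by
    apply Continuous.subtype_mk
    exact ((continuous_const.add continuous_id).smul continuous_const).sub
      (continuous_id.smul continuous_const)
  have hc0 : c 0 = z := by
    apply Subtype.ext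
    simp [hc, ← hzx]
  have hopen : IsOpen (c ⁻¹' interior ((↑) ⁻¹' F : Set (affineSpan ℝ F))) :=
    isOpen_interior.preimage hcont
  have h0 : (0 : ℝ) ∈ c ⁻¹' interior ((↑) ⁻¹' F : Set (affineSpan ℝ F)) := by
    simp [Set.mem_preimage, hc0, hz]
  rw [Metric.isOpen_iff] at hopen
  obtain ⟨ε, hε, hball⟩ := hopen 0 h0
  refine ⟨ε / 2, by positivity, ?_⟩
  have : c (ε / 2) ∈ interior ((↑) ⁻¹' F : Set (affineSpan ℝ F)) := by
    apply hball
    simp [Real.dist_eq, abs_of_pos]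
    rw [abs_of_pos (by positivity)]
    linarith
  have h := interior_subset this
  rwa [Set.mem_preimage] at h

theorem stmt19 {X : Type*} [NormedAddCommGroup X] [NormedSpace ℝ X]
    [FiniteDimensional ℝ X]
    (hpoly : (Set.extremePoints ℝ (Metric.closedBall (0 : X) 1)).Finite)
    (Y : Submodule ℝ X) (hY : Y ≠ ⊤) (F : Set X) (hF : IsFacet F)
    (hint : (intrinsicInterior ℝ F ∩ (Y : Set X)).Nonempty) :
    IsFacet (Subtype.val ⁻¹' F : Set Y) := by
  obtain ⟨hface, hne, hmax⟩ := hF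
  obtain ⟨f, hf1, hFeq⟩ := hface.resolve_left hne
  obtain ⟨x₀, hx₀int, hx₀Y⟩ := hint
  have hx₀F : x₀ ∈ F := intrinsicInterior_subset hx₀int
  have hfx₀ : f x₀ = 1 := (hFeq ▸ hx₀F).2
  have hx₀B : x₀ ∈ Metric.closedBall (0 : X) 1 := (hFeq ▸ hx₀F).1
  -- preimage of ball is ball
  have hballY : (Subtype.val ⁻¹' Metric.closedBall (0 : X) 1 : Set Y) =
      Metric.closedBall (0 : Y) 1 := by
    ext y
    simp [Metric.mem_closedBall, dist_zero_right, Submodule.coe_norm]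
  have hF'eq : (Subtype.val ⁻¹' F : Set Y) =
      Metric.closedBall (0 : Y) 1 ∩ {y : Y | (f.comp Y.subtype) y = 1} := by
    rw [hFeq, ← hballY]
    ext y
    simp [Set.mem_preimage]
  refine ⟨Or.inr ⟨f.comp Y.subtype, ?_, hF'eq⟩, ?_, ?_⟩
  · intro y hy
    rw [← hballY] at hy
    exact hf1 _ hy
  · intro h
    have h0 : (0 : Y) ∈ Metric.closedBall (0 : Y) 1 := Metric.mem_closedBall_self zero_le_one
    rw [← h] at h0
    have : (0 : X) ∈ F := h0
    rw [hFeq] at this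
    simpa using this.2
  · intro Q hQ hQne hsub
    rcases hQ with hQ | ⟨g, hg1, hQeq⟩
    · exact absurd hQ hQne
    -- extend g to X via Hahn-Banach
    have hgnorm : ∀ y : Y, g y ≤ ‖(y : X)‖ := by
      intro y
      rcases eq_or_ne y 0 with rfl | hy0
      · simp
      · have hny : (0 : ℝ) < ‖(y : X)‖ := by
          rw [← Submodule.coe_norm]; exact norm_pos_iff.2 hy0
        have : g (‖(y : X)‖⁻¹ • y) ≤ 1 := by
          apply hg1
          simp only [Metric.mem_closedBall, dist_zero_right, Submodule.coe_norm,
            Submodule.coe_smul, norm_smul, Real.norm_eq_abs, abs_of_pos (inv_pos.2 hny)]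
          rw [inv_mul_cancel₀ hny.ne']
        rw [map_smul, smul_eq_mul] at this
        calc g y = ‖(y : X)‖ * (‖(y : X)‖⁻¹ * g y) := by field_simp
        _ ≤ ‖(y : X)‖ * 1 := by
            exact mul_le_mul_of_nonneg_left this hny.le
        _ = ‖(y : X)‖ := mul_one _
    obtain ⟨G, hGext, hGle⟩ := exists_extension_of_le_sublinear ⟨Y, g⟩ (fun x => ‖x‖)
      (fun c hc x => by simp [norm_smul, abs_of_pos hc]) (fun x y => norm_add_le x y)
      hgnorm
    have hG1 : ∀ x ∈ Metric.closedBall (0 : X) 1, G x ≤ 1 := by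
      intro x hx
      calc G x ≤ ‖x‖ := hGle x
      _ ≤ 1 := by simpa [dist_zero_right] using hx
    -- x₀ viewed in Y
    have hx₀Q : (⟨x₀, hx₀Y⟩ : Y) ∈ Q := hsub hx₀F
    have hGx₀ : G x₀ = 1 := by
      have := hGext ⟨x₀, hx₀Y⟩
      rw [this]
      rw [hQeq] at hx₀Q
      exact hx₀Q.2
    -- the face of B_X given by G contains F
    have hFG : F ⊆ Metric.closedBall (0 : X) 1 ∩ {x | G x = 1} := by
      intro y hyF
      have hyB : y ∈ Metric.closedBall (0 : X) 1 := (hFeq ▸ hyF).1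
      refine ⟨hyB, ?_⟩
      show G y = 1
      obtain ⟨t, ht, hmem⟩ := relint_extend hx₀int hyF
      have hmemB : (1 + t) • x₀ - t • y ∈ Metric.closedBall (0 : X) 1 := (hFeq ▸ hmem).1
      have h1 : G ((1 + t) • x₀ - t • y) ≤ 1 := hG1 _ hmemB
      have h2 : G y ≤ 1 := hG1 _ hyB
      have h3 : G ((1 + t) • x₀ - t • y) = (1 + t) * G x₀ - t * G y := by
        simp [map_sub, map_smul, smul_eq_mul]
      rw [h3, hGx₀] at h1
      have : 1 ≤ G y := by nlinarith
      linarith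
    have hGne : Metric.closedBall (0 : X) 1 ∩ {x | G x = 1} ≠ Metric.closedBall (0 : X) 1 := by
      intro h
      have h0 : (0 : X) ∈ Metric.closedBall (0 : X) 1 := Metric.mem_closedBall_self zero_le_one
      rw [← h] at h0
      simpa using h0.2
    have hFeqG : F = Metric.closedBall (0 : X) 1 ∩ {x | G x = 1} :=
      hmax _ (Or.inr ⟨G, hG1, rfl⟩) hGne hFG
    -- now Q ⊆ F'
    apply Set.Subset.antisymm hsub
    intro q hq
    rw [hQeq] at hq
    have hqB : (q : X) ∈ Metric.closedBall (0 : X) 1 := by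
      rw [← hballY] at hq
      exact hq.1
    have hGq : G (q : X) = 1 := by
      rw [hGext q]
      exact hq.2
    show (q : X) ∈ F
    rw [hFeqG]
    exact ⟨hqB, hGq⟩
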